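/- Let V be a 4-dimensional vector space over a field K and B a nondegenerate alternating bilinear form on V. Then there do not exist three 2-dimensional totally isotropic subspaces L₁, L₂, L₃ of V such that the pairwise intersections L₁ ∩ L₂, L₁ ∩ L₃, L₂ ∩ L₃ are all nonzero and pairwise distinct. Equivalently, if L₁, L₂, L₃ are 2-dimensional totally isotropic subspaces whose pairwise intersections are all nonzero, then at least two of the subspaces L₁ ∩ L₂, L₁ ∩ L₃, L₂ ∩ L₃ coincide. -/

import Mathlib

open Module Submodule

/-- Auxiliary: the intersection of two distinct 2-dimensional subspaces, if nonzero,
has dimension 1. -/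
lemma aux_finrank_inf_eq_one {K V : Type*} [Field K] [AddCommGroup V] [Module K V]
    [FiniteDimensional K V] {P Q : Submodule K V}
    (hP : Module.finrank K P = 2) (hQ : Module.finrank K Q = 2)
    (hne : P ≠ Q) (hnb : P ⊓ Q ≠ ⊥) : Module.finrank K ↥(P ⊓ Q) = 1 := by
  have hle : Module.finrank K ↥(P ⊓ Q) ≤ 2 := hP ▸ Submodule.finrank_mono inf_le_left
  have hpos : Module.finrank K ↥(P ⊓ Q) ≠ 0 := by
    exact fun h0 => hnb (Submodule.finrank_eq_zero.mp h0)
  have hne2 : Module.finrank K ↥(P ⊓ Q) ≠ 2 := by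
    intro h2
    have e1 : P ⊓ Q = P := eq_of_le_of_finrank_le inf_le_left (by omega)
    have e2 : P ⊓ Q = Q := eq_of_le_of_finrank_le inf_le_right (by omega)
    exact hne (e1 ▸ e2)
  omega

/-- Auxiliary: a nonzero element of a 1-dimensional subspace spans it. -/
lemma aux_span_eq {K V : Type*} [Field K] [AddCommGroup V] [Module K V]
    [FiniteDimensional K V] {N : Submodule K V} (hN : Module.finrank K N = 1)
    {u : V} (hu : u ∈ N) (hu0 : u ≠ 0) : Submodule.span K {u} = N := by
  apply eq_of_le_of_finrank_le ((Submodule.span_singleton_le_iff_mem u N).mpr hu)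
  rw [hN, finrank_span_singleton hu0]

/-- Let `V` be a `4`-dimensional vector space with a nondegenerate alternating
bilinear form `B`. There do not exist three `2`-dimensional totally isotropic
subspaces `L₁`, `L₂`, `L₃` of `V` whose pairwise intersections are all nonzero and
pairwise distinct: if the pairwise intersections are all nonzero, then at least two
of `L₁ ⊓ L₂`, `L₁ ⊓ L₃`, `L₂ ⊓ L₃` coincide. -/
theorem no_three_isotropic_planes_with_distinct_intersection_lines
    {K V : Type*} [Field K] [AddCommGroup V] [Module K V] [FiniteDimensional K V]
    (hdim : Module.finrank K V = 4)
    (B : V →ₗ[K] V →ₗ[K] K)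
    (halt : ∀ x : V, B x x = 0)
    (hnd : ∀ x : V, (∀ y : V, B x y = 0) → x = 0)
    (L₁ L₂ L₃ : Submodule K V)
    (hL₁dim : Module.finrank K L₁ = 2)
    (hL₂dim : Module.finrank K L₂ = 2)
    (hL₃dim : Module.finrank K L₃ = 2)
    (hL₁ : ∀ x ∈ L₁, ∀ y ∈ L₁, B x y = 0)
    (hL₂ : ∀ x ∈ L₂, ∀ y ∈ L₂, B x y = 0)
    (hL₃ : ∀ x ∈ L₃, ∀ y ∈ L₃, B x y = 0)
    (h₁₂ : L₁ ⊓ L₂ ≠ ⊥) (h₁₃ : L₁ ⊓ L₃ ≠ ⊥) (h₂₃ : L₂ ⊓ L₃ ≠ ⊥) :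
    L₁ ⊓ L₂ = L₁ ⊓ L₃ ∨ L₁ ⊓ L₂ = L₂ ⊓ L₃ ∨ L₁ ⊓ L₃ = L₂ ⊓ L₃ := by
  by_contra hcon
  push_neg at hcon
  obtain ⟨h1, h2, h3⟩ := hcon
  -- the three planes are pairwise distinct
  have hne12 : L₁ ≠ L₂ := fun h => h3 (by rw [h])
  have hne13 : L₁ ≠ L₃ := fun h => h2 (by rw [h, inf_comm L₃ L₂])
  have hne23 : L₂ ≠ L₃ := fun h => h1 (by rw [h])
  -- the pairwise intersections are lines
  have hd12 : Module.finrank K ↥(L₁ ⊓ L₂) = 1 :=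
    aux_finrank_inf_eq_one hL₁dim hL₂dim hne12 h₁₂
  have hd13 : Module.finrank K ↥(L₁ ⊓ L₃) = 1 :=
    aux_finrank_inf_eq_one hL₁dim hL₃dim hne13 h₁₃
  have hd23 : Module.finrank K ↥(L₂ ⊓ L₃) = 1 :=
    aux_finrank_inf_eq_one hL₂dim hL₃dim hne23 h₂₃
  -- pick generators
  obtain ⟨u, hu, hu0⟩ := Submodule.exists_mem_ne_zero_of_ne_bot h₁₂
  obtain ⟨v, hv, hv0⟩ := Submodule.exists_mem_ne_zero_of_ne_bot h₁₃
  obtain ⟨w, hw, hw0⟩ := Submodule.exists_mem_ne_zero_of_ne_bot h₂₃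
  have hsu : Submodule.span K {u} = L₁ ⊓ L₂ := aux_span_eq hd12 hu hu0
  have hsv : Submodule.span K {v} = L₁ ⊓ L₃ := aux_span_eq hd13 hv hv0
  have hsw : Submodule.span K {w} = L₂ ⊓ L₃ := aux_span_eq hd23 hw hw0
  -- L₁ = span {u, v}
  have huv : Submodule.span K {u, v} = L₁ := by
    have hle : Submodule.span K {u, v} ≤ L₁ := by
      rw [Submodule.span_le]
      rintro x (rfl | rfl)
      · exact hu.1
      · exact hv.1
    have h2le : 2 ≤ Module.finrank K ↥(Submodule.span K ({u, v} : Set V)) := by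
      by_contra hlt
      push_neg at hlt
      have hule : Submodule.span K {u} ≤ Submodule.span K ({u, v} : Set V) :=
        Submodule.span_mono (by simp)
      have hvle : Submodule.span K {v} ≤ Submodule.span K ({u, v} : Set V) :=
        Submodule.span_mono (by simp)
      have e1 : Submodule.span K {u} = Submodule.span K ({u, v} : Set V) :=
        eq_of_le_of_finrank_le hule (by rw [finrank_span_singleton hu0]; omega)
      have e2 : Submodule.span K {v} = Submodule.span K ({u, v} : Set V) :=
        eq_of_le_of_finrank_le hvle (by rw [finrank_span_singleton hv0]; omega)
      exact h1 (by rw [← hsu, ← hsv, e1, e2])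
    exact eq_of_le_of_finrank_le hle (by omega)
  -- B as a bilinear form is nondegenerate and reflexive
  have hBnd : LinearMap.BilinForm.Nondegenerate B :=
    (LinearMap.IsRefl.nondegenerate_iff_separatingLeft (LinearMap.IsAlt.isRefl halt)).mpr hnd
  have hBalt : B.IsAlt := halt
  have hBrefl : B.IsRefl := hBalt.isRefl
  -- the orthogonal of L₁ is L₁ itself
  have horthle : L₁ ≤ LinearMap.BilinForm.orthogonal B L₁ := fun x hx n hn => hL₁ n hn x hx
  have horthdim : Module.finrank K ↥(LinearMap.BilinForm.orthogonal B L₁) = 2 := by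
    rw [LinearMap.BilinForm.finrank_orthogonal hBnd L₁, hdim, hL₁dim]
  have horth : L₁ = LinearMap.BilinForm.orthogonal B L₁ :=
    eq_of_le_of_finrank_le horthle (by omega)
  -- w is orthogonal to L₁, hence lies in L₁
  have hwL₁ : w ∈ L₁ := by
    rw [horth]
    intro n hn
    rw [← huv] at hn
    induction hn using Submodule.span_induction with
    | mem x hx =>
      rcases hx with rfl | rfl
      · exact hL₂ x hu.2 w hw.1
      · exact hL₃ x hv.2 w hw.2
    | zero => simp [LinearMap.BilinForm.IsOrtho]
    | add x y _ _ hx hy =>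
      show B (x + y) w = 0
      rw [map_add, LinearMap.add_apply, hx, hy, add_zero]
    | smul a x _ hx =>
      show B (a • x) w = 0
      rw [map_smul, LinearMap.smul_apply, hx, smul_zero]
  -- then span w ⊆ L₁ ⊓ L₂ = span u, contradicting distinctness
  have hwin : w ∈ L₁ ⊓ L₂ := ⟨hwL₁, hw.1⟩
  have : Submodule.span K {w} ≤ L₁ ⊓ L₂ :=
    (Submodule.span_singleton_le_iff_mem w _).mpr hwin
  have heq : Submodule.span K {w} = L₁ ⊓ L₂ :=
    eq_of_le_of_finrank_le this (by rw [hd12, finrank_span_singleton hw0])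
  exact h2 (by rw [← hsw, heq])
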